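/- For every odd integer n ≥ 29, writing r = (n+1)/2, the ratio (5^{r²−r/2} · 11^{r−1/2} · (r−1)! / (2^{2r−1} π^r · 2^{r+1})) · ∏_{i=1}^{r−1} (2i−1)!/(2π)^{2i} is greater than (r−1)!. -/

import Mathlib

open Real Finset
set_option maxHeartbeats 1000000

private lemma fac_ge_pow : ∀ i, 9 ≤ i → (2*π)^(2*i) ≤ (Nat.factorial (2*i-1) : ℝ) := by
  intro i hi
  induction i, hi using Nat.le_induction with
  | base =>
      calc (2*π)^(2*9) ≤ 6.3^18 := by
            apply pow_le_pow_left₀ (by positivity)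
            nlinarith [pi_lt_d2]
        _ ≤ _ := by norm_num [Nat.factorial]
  | succ k hk ih =>
      have h1 : 2*(k+1)-1 = (2*k-1) + 1 + 1 := by omega
      have h2 : (2*k-1)+1 = 2*k := by omega
      rw [h1, Nat.factorial_succ, Nat.factorial_succ, h2]
      have hpi : (2*π)^2 ≤ 40 := by nlinarith [pi_lt_d2, pi_pos]
      have h3 : (2*π)^(2*(k+1)) = (2*π)^(2*k) * (2*π)^2 := by ring
      rw [h3]
      push_cast [h2]
      have h40 : (40:ℝ) ≤ (2*k+1)*(2*k) := by
        have : (18:ℝ) ≤ 2*(k:ℝ) := by exact_mod_cast Nat.mul_le_mul_left 2 hk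
        nlinarith
      have hfac : (1:ℝ) ≤ (Nat.factorial (2*k-1) : ℝ) := by
        exact_mod_cast Nat.one_le_iff_ne_zero.mpr (Nat.factorial_ne_zero _)
      nlinarith [pow_nonneg (mul_nonneg (by norm_num : (0:ℝ) ≤ 2) pi_pos.le) (2*k), ih]

private lemma key (r : ℕ) (hr : 15 ≤ r) :
    ((r - 1).factorial : ℝ) <
      (5 : ℝ) ^ ((r : ℝ) ^ 2 - (r : ℝ) / 2) * (11 : ℝ) ^ ((r : ℝ) - 1 / 2) *
        ((r - 1).factorial : ℝ) / (2 ^ (2 * r - 1) * π ^ r * 2 ^ (r + 1)) *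
        ∏ i ∈ Finset.Icc 1 (r - 1),
          (Nat.factorial (2 * i - 1) : ℝ) / (2 * π) ^ (2 * i) := by
  have hrR : (15:ℝ) ≤ (r:ℝ) := by exact_mod_cast hr
  set e1 : ℝ := (r : ℝ) ^ 2 - (r : ℝ) / 2 with he1
  set e2 : ℝ := (r : ℝ) - 1 / 2 with he2
  set N : ℝ := 428017682605583614976547335700480000000000 with hN
  set P : ℝ := ∏ i ∈ Finset.Icc 1 (r - 1),
      (Nat.factorial (2 * i - 1) : ℝ) / (2 * π) ^ (2 * i) with hP
  set P1 : ℝ := ∏ i ∈ Finset.Ioc 0 8,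
      (Nat.factorial (2 * i - 1) : ℝ) / (2 * π) ^ (2 * i) with hP1
  set P2 : ℝ := ∏ i ∈ Finset.Ioc 8 (r-1),
      (Nat.factorial (2 * i - 1) : ℝ) / (2 * π) ^ (2 * i) with hP2
  have hsplit : P = P1 * P2 := by
    rw [hP, hP1, hP2,
      show Finset.Icc 1 (r-1) = Finset.Ioc 0 (r-1) from Finset.Icc_add_one_left_eq_Ioc 0 (r-1),
      Finset.prod_Ioc_consecutive _ (by omega) (by omega : 8 ≤ r - 1)]
  have hP1val : P1 = N / (2*π)^72 := by
    rw [hP1, show Finset.Ioc 0 8 = ({1,2,3,4,5,6,7,8} : Finset ℕ) from by decide]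
    norm_num [Finset.prod_insert, Nat.factorial, hN]
    ring
  have hP1lb : N / 6.3^72 ≤ P1 := by
    rw [hP1val]
    apply div_le_div_of_nonneg_left (by norm_num [hN]) (by positivity)
    apply pow_le_pow_left₀ (by positivity)
    nlinarith [pi_lt_d2]
  have hP2ge : (1:ℝ) ≤ P2 := by
    rw [hP2]
    have h1 : ∀ i ∈ Finset.Ioc 8 (r-1), (1:ℝ) ≤ (Nat.factorial (2*i-1) : ℝ) / (2*π)^(2*i) := by
      intro i hi
      have hi9 : 9 ≤ i := by simp at hi; omega
      rw [le_div_iff₀ (by positivity)]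
      simpa using fac_ge_pow i hi9
    calc (1:ℝ) = ∏ _i ∈ Finset.Ioc 8 (r-1), (1:ℝ) := by simp
      _ ≤ _ := Finset.prod_le_prod (fun i _ => zero_le_one) h1
  -- main numeric inequality
  have h11 : (1:ℝ) ≤ (11:ℝ) ^ e2 := by
    have := Real.rpow_le_rpow_of_exponent_le (by norm_num : (1:ℝ) ≤ 11)
      (by rw [he2]; linarith : (0:ℝ) ≤ e2)
    simpa using this
  have hexp : ((14*r : ℕ):ℝ) ≤ e1 := by
    push_cast [he1]; nlinarith
  have h5 : (5:ℝ)^(14*r) ≤ (5:ℝ) ^ e1 := by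
    rw [← Real.rpow_natCast 5 (14*r)]
    exact Real.rpow_le_rpow_of_exponent_le (by norm_num) hexp
  have hD : (2:ℝ)^(2*r-1) * π^r * 2^(r+1) ≤ 32^r := by
    have h2 : (2:ℝ)^(2*r-1) * 2^(r+1) = 8^r := by
      rw [show ((8:ℝ))^r = 2^(3*r) from by rw [pow_mul]; norm_num, ← pow_add]
      congr 1; omega
    have hπ : π^r ≤ 4^r := pow_le_pow_left₀ pi_pos.le (by nlinarith [pi_lt_d2]) r
    calc (2:ℝ)^(2*r-1) * π^r * 2^(r+1) = ((2:ℝ)^(2*r-1) * 2^(r+1)) * π^r := by ring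
      _ = 8^r * π^r := by rw [h2]
      _ ≤ 8^r * 4^r := by gcongr
      _ = 32^r := by rw [← mul_pow]; norm_num
  have h63 : (6.3:ℝ)^72 < 5^(11*r) := by
    calc (6.3:ℝ)^72 < 5^165 := by norm_num
      _ ≤ 5^(11*r) := pow_le_pow_right₀ (by norm_num) (by omega)
  have hmain : (2:ℝ)^(2*r-1) * π^r * 2^(r+1) * 6.3^72 < 5^e1 * 11^e2 * N := by
    calc (2:ℝ)^(2*r-1) * π^r * 2^(r+1) * 6.3^72
        ≤ 32^r * 6.3^72 := by gcongr <;> positivity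
      _ < 32^r * 5^(11*r) := by
          exact mul_lt_mul_of_pos_left h63 (by positivity)
      _ ≤ 125^r * 5^(11*r) := by gcongr <;> norm_num
      _ = 5^(14*r) := by
          rw [show ((125:ℝ))^r = 5^(3*r) from by rw [pow_mul]; norm_num, ← pow_add]
          congr 1; omega
      _ ≤ 5^e1 := h5
      _ ≤ 5^e1 * (11^e2 * N) := by
          have hNge : (1:ℝ) ≤ N := by rw [hN]; norm_num
          have h1N : (1:ℝ) ≤ 11^e2 * N := by nlinarith
          nlinarith [mul_le_mul_of_nonneg_left h1N
            (Real.rpow_pos_of_pos (by norm_num : (0:ℝ) < 5) e1).le]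
      _ = 5^e1 * 11^e2 * N := by ring
  -- assemble
  have hF : (0:ℝ) < ((r-1).factorial : ℝ) := by exact_mod_cast Nat.factorial_pos _
  have hQ : 1 < (5:ℝ) ^ e1 * 11 ^ e2 / (2^(2*r-1) * π^r * 2^(r+1)) * P := by
    have hden : (0:ℝ) < (2:ℝ)^(2*r-1) * π^r * 2^(r+1) * 6.3^72 := by positivity
    have hQ0 : (0:ℝ) < (5:ℝ) ^ e1 * 11 ^ e2 / (2^(2*r-1) * π^r * 2^(r+1)) := by
      have := Real.rpow_pos_of_pos (by norm_num : (0:ℝ) < 5) e1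
      have := Real.rpow_pos_of_pos (by norm_num : (0:ℝ) < 11) e2
      positivity
    calc (1:ℝ) < (5^e1 * 11^e2 * N) / ((2:ℝ)^(2*r-1) * π^r * 2^(r+1) * 6.3^72) :=
          (one_lt_div hden).mpr hmain
      _ = (5:ℝ) ^ e1 * 11 ^ e2 / (2^(2*r-1) * π^r * 2^(r+1)) * (N / 6.3^72) := by
          ring
      _ ≤ (5:ℝ) ^ e1 * 11 ^ e2 / (2^(2*r-1) * π^r * 2^(r+1)) * P1 := by
          exact mul_le_mul_of_nonneg_left hP1lb hQ0.le
      _ ≤ (5:ℝ) ^ e1 * 11 ^ e2 / (2^(2*r-1) * π^r * 2^(r+1)) * (P1 * P2) := by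
          have hP1pos : 0 < P1 := by rw [hP1val]; positivity
          nlinarith [mul_pos hQ0 hP1pos]
      _ = _ := by rw [← hsplit]
  calc ((r-1).factorial : ℝ) = ((r-1).factorial : ℝ) * 1 := (mul_one _).symm
    _ < ((r-1).factorial : ℝ) *
        ((5:ℝ) ^ e1 * 11 ^ e2 / (2^(2*r-1) * π^r * 2^(r+1)) * P) :=
          (mul_lt_mul_iff_right₀ hF).mpr hQ
    _ = _ := by ring

theorem stmt_19 (n : ℕ) (hodd : Odd n) (hn : 29 ≤ n) :
    let r := (n + 1) / 2
    ((r - 1).factorial : ℝ) <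
      (5 : ℝ) ^ ((r : ℝ) ^ 2 - (r : ℝ) / 2) * (11 : ℝ) ^ ((r : ℝ) - 1 / 2) *
        ((r - 1).factorial : ℝ) / (2 ^ (2 * r - 1) * π ^ r * 2 ^ (r + 1)) *
        ∏ i ∈ Finset.Icc 1 (r - 1),
          (Nat.factorial (2 * i - 1) : ℝ) / (2 * π) ^ (2 * i) := by
  exact key ((n+1)/2) (by omega)
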